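/- Let θ ∈ (-π/2,π/2), let A = cos(θ/2)(-iα₁∂_x - α₂x) and B = sin(θ/2)(-α₁∂_x - iα₂x) act on C_c^∞(ℝ)⁴ ⊂ L²(ℝ;ℂ⁴). Then for every ψ ∈ C_c^∞(ℝ)⁴ and every k ∈ ℝ: (i) ‖(A+ik)ψ‖² = ‖Aψ‖² + k²‖ψ‖² ≥ cos²(θ/2)(‖ψ'‖² + ‖xψ‖²) + (k² - cos²(θ/2))‖ψ‖²; (ii) ‖Bψ‖² ≤ sin²(θ/2)(‖ψ'‖² + ‖xψ‖² + ‖ψ‖²); consequently, if k² > 1, there exists a constant b < 1 (independent of ψ) such that ‖Bψ‖ ≤ b‖(A+ik)ψ‖ for all ψ ∈ C_c^∞(ℝ)⁴. -/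

import Mathlib

noncomputable section

open MeasureTheory Filter Complex
open scoped InnerProductSpace

/-- The state space `ℂ⁴`. -/
abbrev E4 : Type := EuclideanSpace ℂ (Fin 4)

/-- The Hilbert space `L²(ℝ; ℂ⁴)`. -/
abbrev HS := Lp E4 2 (volume : Measure ℝ)

/-- Action of a `4 × 4` complex matrix on `ℂ⁴`. -/
def mvec (M : Matrix (Fin 4) (Fin 4) ℂ) (v : E4) : E4 :=
  (WithLp.equiv 2 (Fin 4 → ℂ)).symm (M.mulVec ((WithLp.equiv 2 (Fin 4 → ℂ)) v))

/-- The Dirac matrix `α₁ = [[0, σ₁], [σ₁, 0]]`. -/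
def alpha1 : Matrix (Fin 4) (Fin 4) ℂ :=
  !![0, 0, 0, 1; 0, 0, 1, 0; 0, 1, 0, 0; 1, 0, 0, 0]

/-- The Dirac matrix `α₂ = [[0, σ₂], [σ₂, 0]]`. -/
def alpha2 : Matrix (Fin 4) (Fin 4) ℂ :=
  !![0, 0, 0, -Complex.I; 0, 0, Complex.I, 0; 0, -Complex.I, 0, 0; Complex.I, 0, 0, 0]

/-- The Dirac matrix `α₃ = [[0, σ₃], [σ₃, 0]]`. -/
def alpha3 : Matrix (Fin 4) (Fin 4) ℂ :=
  !![0, 0, 1, 0; 0, 0, 0, -1; 1, 0, 0, 0; 0, -1, 0, 0]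

/-- The Dirac matrix `α₀ = [[I₂, 0], [0, -I₂]]`. -/
def alpha0 : Matrix (Fin 4) (Fin 4) ℂ :=
  !![1, 0, 0, 0; 0, 1, 0, 0; 0, 0, -1, 0; 0, 0, 0, -1]

/-- `g` is the distributional (weak) derivative of `f`. -/
def IsWeakDeriv {E : Type*} [NormedAddCommGroup E] [NormedSpace ℂ E]
    (f g : ℝ → E) : Prop :=
  ∀ φ : ℝ → ℂ, ContDiff ℝ (⊤ : ℕ∞) φ → HasCompactSupport φ →
    ∫ x : ℝ, deriv φ x • f x = - ∫ x : ℝ, φ x • g x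

/-- Membership in `𝒟 = H¹(ℝ) ∩ L²(ℝ, x² dx)`. -/
def MemFormDom {E : Type*} [NormedAddCommGroup E] [NormedSpace ℂ E]
    (f : ℝ → E) : Prop :=
  MemLp f 2 volume ∧ (∃ g, MemLp g 2 volume ∧ IsWeakDeriv f g) ∧
    MemLp (fun x : ℝ => (x : ℂ) • f x) 2 volume

/-- Membership in `D(S_θ) = H²(ℝ) ∩ L²(ℝ, x⁴ dx)`. -/
def MemSDom {E : Type*} [NormedAddCommGroup E] [NormedSpace ℂ E]
    (f : ℝ → E) : Prop :=
  MemLp f 2 volume ∧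
    (∃ g h, IsWeakDeriv f g ∧ MemLp g 2 volume ∧ IsWeakDeriv g h ∧ MemLp h 2 volume) ∧
    MemLp (fun x : ℝ => ((x : ℂ) ^ 2) • f x) 2 volume

/-- The graph of the rotated relativistic harmonic oscillator `H_θ` with mass `m`:
`InGraphH θ m ψ χ` holds iff `ψ ∈ D(H_θ) = 𝒟⁴` and
`χ = -i e^{-iθ/2} α₁ ψ' - e^{iθ/2} α₂ (xψ) + m α₃ ψ`. -/
def InGraphH (θ m : ℝ) (ψ χ : HS) : Prop :=
  MemFormDom (ψ : ℝ → E4) ∧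
  ∃ g : ℝ → E4, IsWeakDeriv (ψ : ℝ → E4) g ∧
    (χ : ℝ → E4) =ᵐ[volume] fun x : ℝ =>
      (-Complex.I * Complex.exp (-(θ / 2 : ℝ) * Complex.I)) • mvec alpha1 (g x)
        - Complex.exp ((θ / 2 : ℝ) * Complex.I) • mvec alpha2 ((x : ℂ) • ψ x)
        + (m : ℂ) • mvec alpha3 (ψ x)

/-- `R` is the (bounded, everywhere defined) inverse of `T - z`, where `T` is the operator
whose graph is the relation `Graph`. -/
def IsResolventOf (Graph : HS → HS → Prop) (z : ℂ) (R : HS →L[ℂ] HS) : Prop :=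
  (∀ χ : HS, Graph (R χ) (χ + z • R χ)) ∧
  (∀ ψ χ : HS, Graph ψ χ → R (χ - z • ψ) = ψ)

/-- `z` belongs to the resolvent set `ρ(H_θ)`. -/
def InResolventSetH (θ m : ℝ) (z : ℂ) : Prop :=
  ∃ R : HS →L[ℂ] HS, IsResolventOf (InGraphH θ m) z R

/-- `z` belongs to the `ε`-pseudospectrum `σ_ε(H_θ)` (with the convention `σ₀ = σ`). -/
def InPseudospectrumH (θ m ε : ℝ) (z : ℂ) : Prop :=
  ¬ InResolventSetH θ m z ∨
    (0 < ε ∧ ∃ R : HS →L[ℂ] HS, IsResolventOf (InGraphH θ m) z R ∧ 1 / ε < ‖R‖)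


/-- Pointwise action of the symmetric part `A = cos(θ/2)(-i α₁ ∂_x - α₂ x)`. -/
def Apt (θ : ℝ) (ψ : ℝ → E4) : ℝ → E4 := fun x : ℝ =>
  (Real.cos (θ / 2) : ℂ) •
    ((-Complex.I) • mvec alpha1 (deriv ψ x) - mvec alpha2 ((x : ℂ) • ψ x))

/-- Pointwise action of the anti-symmetric part `B = sin(θ/2)(-α₁ ∂_x - i α₂ x)`. -/
def Bpt (θ : ℝ) (ψ : ℝ → E4) : ℝ → E4 := fun x : ℝ =>
  (Real.sin (θ / 2) : ℂ) •
    (-(mvec alpha1 (deriv ψ x)) - Complex.I • mvec alpha2 ((x : ℂ) • ψ x))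

/-- The squared `L²(ℝ; ℂ⁴)` norm. -/
def L2sq (f : ℝ → E4) : ℝ := ∫ x : ℝ, ‖f x‖ ^ 2

-- ===================== auxiliary machinery =====================

/-- The matrix `Σ₃ = diag(σ₃, σ₃)`. -/
def Sigma3 : Matrix (Fin 4) (Fin 4) ℂ :=
  !![1,0,0,0; 0,-1,0,0; 0,0,1,0; 0,0,0,-1]

lemma mvec_apply' (M : Matrix (Fin 4) (Fin 4) ℂ) (v : E4) (i : Fin 4) :
    mvec M v i = ∑ j, M i j * v j := rfl

lemma mvec_a1 (v : E4) (i : Fin 4) : mvec alpha1 v i = ![v 3, v 2, v 1, v 0] i := by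
  fin_cases i <;> simp [mvec_apply', alpha1, Fin.sum_univ_four]

lemma mvec_a2 (v : E4) (i : Fin 4) :
    mvec alpha2 v i = ![-Complex.I * v 3, Complex.I * v 2, -Complex.I * v 1, Complex.I * v 0] i := by
  fin_cases i <;> simp [mvec_apply', alpha2, Fin.sum_univ_four]

lemma mvec_s3 (v : E4) (i : Fin 4) : mvec Sigma3 v i = ![v 0, -v 1, v 2, -v 3] i := by
  fin_cases i <;> simp [mvec_apply', Sigma3, Fin.sum_univ_four]

def mvecCLM (M : Matrix (Fin 4) (Fin 4) ℂ) : E4 →L[ℂ] E4 :=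
  LinearMap.toContinuousLinearMap
  { toFun := mvec M
    map_add' := by
      intro v w; ext i
      simp only [mvec_apply', PiLp.add_apply, mul_add, Finset.sum_add_distrib]
    map_smul' := by
      intro a v; ext i
      simp only [mvec_apply', PiLp.smul_apply, smul_eq_mul, Finset.mul_sum, RingHom.id_apply]
      exact Finset.sum_congr rfl fun j _ => by ring }

lemma mvecCLM_apply (M : Matrix (Fin 4) (Fin 4) ℂ) (v : E4) : mvecCLM M v = mvec M v := rfl

lemma mvec_zero (M : Matrix (Fin 4) (Fin 4) ℂ) : mvec M 0 = 0 := map_zero (mvecCLM M)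

lemma mvec_smulc (M : Matrix (Fin 4) (Fin 4) ℂ) (a : ℂ) (v : E4) :
    mvec M (a • v) = a • mvec M v := map_smul (mvecCLM M) a v

lemma inner_expand (u v : E4) :
    ⟪u, v⟫_ℂ = (starRingEnd ℂ) (u 0) * v 0 + (starRingEnd ℂ) (u 1) * v 1
      + (starRingEnd ℂ) (u 2) * v 2 + (starRingEnd ℂ) (u 3) * v 3 := by
  simp [PiLp.inner_apply, RCLike.inner_apply, Fin.sum_univ_four]; ring

lemma norm_sq_expand (u : E4) :
    ‖u‖^2 = ((starRingEnd ℂ) (u 0) * u 0 + (starRingEnd ℂ) (u 1) * u 1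
      + (starRingEnd ℂ) (u 2) * u 2 + (starRingEnd ℂ) (u 3) * u 3).re := by
  rw [@norm_sq_eq_re_inner ℂ, inner_expand]; rfl

lemma norm_sq_mvec_a1 (u : E4) : ‖mvec alpha1 u‖^2 = ‖u‖^2 := by
  simp only [norm_sq_expand, mvec_a1]
  simp only [Matrix.cons_val_zero, Matrix.cons_val_one, Matrix.cons_val_succ, Matrix.head_cons,
    Matrix.cons_val_two, Matrix.cons_val_three, Matrix.vecHead, Matrix.vecTail,
    Function.comp_apply]
  simp only [Complex.add_re, Complex.mul_re, Complex.conj_re, Complex.conj_im]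
  ring

lemma norm_sq_mvec_a2 (u : E4) : ‖mvec alpha2 u‖^2 = ‖u‖^2 := by
  simp only [norm_sq_expand, mvec_a2]
  simp only [Matrix.cons_val_zero, Matrix.cons_val_one, Matrix.cons_val_succ, Matrix.head_cons,
    Matrix.cons_val_two, Matrix.cons_val_three, Matrix.vecHead, Matrix.vecTail,
    Function.comp_apply, map_mul, map_neg, Complex.conj_I]
  simp only [Complex.add_re, Complex.mul_re, Complex.mul_im, Complex.conj_re, Complex.conj_im,
    Complex.neg_re, Complex.neg_im, Complex.I_re, Complex.I_im]
  ring

lemma inner_a1_a2 (u v : E4) :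
    ⟪mvec alpha1 u, mvec alpha2 v⟫_ℂ = Complex.I * ⟪u, mvec Sigma3 v⟫_ℂ := by
  simp only [PiLp.inner_apply, RCLike.inner_apply, Fin.sum_univ_four, mvec_a1, mvec_a2, mvec_s3]
  simp only [Matrix.cons_val_zero, Matrix.cons_val_one, Matrix.cons_val_succ, Matrix.head_cons,
    Matrix.cons_val_two, Matrix.cons_val_three, Matrix.vecHead, Matrix.vecTail,
    Function.comp_apply, map_mul, map_neg, Complex.conj_I]
  ring

lemma im_a2_self (p : E4) : (⟪mvec alpha2 p, p⟫_ℂ).im = 0 := by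
  simp only [PiLp.inner_apply, RCLike.inner_apply, Fin.sum_univ_four, mvec_a2]
  simp only [Matrix.cons_val_zero, Matrix.cons_val_one, Matrix.cons_val_succ, Matrix.head_cons,
    Matrix.cons_val_two, Matrix.cons_val_three, Matrix.vecHead, Matrix.vecTail,
    Function.comp_apply, map_mul, map_neg, Complex.conj_I]
  simp only [Complex.add_im, Complex.mul_im, Complex.mul_re, Complex.conj_re, Complex.conj_im,
    Complex.neg_re, Complex.neg_im, Complex.I_re, Complex.I_im]
  ring

lemma re_a1_symm (a b : E4) : (⟪mvec alpha1 a, b⟫_ℂ).re = (⟪mvec alpha1 b, a⟫_ℂ).re := by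
  simp only [PiLp.inner_apply, RCLike.inner_apply, Fin.sum_univ_four, mvec_a1]
  simp only [Matrix.cons_val_zero, Matrix.cons_val_one, Matrix.cons_val_succ, Matrix.head_cons,
    Matrix.cons_val_two, Matrix.cons_val_three, Matrix.vecHead, Matrix.vecTail,
    Function.comp_apply]
  simp only [Complex.add_re, Complex.mul_re, Complex.conj_re, Complex.conj_im]
  ring

lemma re_s3_symm (a b : E4) : (⟪a, mvec Sigma3 b⟫_ℂ).re = (⟪b, mvec Sigma3 a⟫_ℂ).re := by
  simp only [PiLp.inner_apply, RCLike.inner_apply, Fin.sum_univ_four, mvec_s3]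
  simp only [Matrix.cons_val_zero, Matrix.cons_val_one, Matrix.cons_val_succ, Matrix.head_cons,
    Matrix.cons_val_two, Matrix.cons_val_three, Matrix.vecHead, Matrix.vecTail,
    Function.comp_apply]
  simp only [Complex.add_re, Complex.mul_re, Complex.mul_im, Complex.conj_re, Complex.conj_im,
    Complex.neg_re, Complex.neg_im]
  ring

lemma abs_re_s3_le (p : E4) : |(⟪p, mvec Sigma3 p⟫_ℂ).re| ≤ ‖p‖^2 := by
  rw [abs_le, norm_sq_expand]
  simp only [PiLp.inner_apply, RCLike.inner_apply, Fin.sum_univ_four, mvec_s3]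
  simp only [Matrix.cons_val_zero, Matrix.cons_val_one, Matrix.cons_val_succ, Matrix.head_cons,
    Matrix.cons_val_two, Matrix.cons_val_three, Matrix.vecHead, Matrix.vecTail,
    Function.comp_apply]
  simp only [Complex.add_re, Complex.mul_re, Complex.mul_im, Complex.conj_re, Complex.conj_im,
    Complex.neg_re, Complex.neg_im]
  constructor <;> nlinarith [sq_nonneg ((p 0).re), sq_nonneg ((p 0).im), sq_nonneg ((p 1).re),
    sq_nonneg ((p 1).im), sq_nonneg ((p 2).re), sq_nonneg ((p 2).im), sq_nonneg ((p 3).re),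
    sq_nonneg ((p 3).im)]

lemma ptA' (c k : ℝ) (u v p : E4) :
    ‖(c:ℂ) • ((-Complex.I) • mvec alpha1 u - mvec alpha2 v) + (Complex.I*(k:ℂ)) • p‖^2
    = c^2*‖u‖^2 + c^2*‖v‖^2 + k^2*‖p‖^2 + c^2*(2*(⟪u, mvec Sigma3 v⟫_ℂ).re)
      - c*k*(2*(⟪mvec alpha1 u, p⟫_ℂ).re) + 2*(c*k)*(⟪mvec alpha2 v, p⟫_ℂ).im := by
  rw [norm_add_sq (𝕜 := ℂ)]
  have h1 : ‖(c:ℂ) • ((-Complex.I) • mvec alpha1 u - mvec alpha2 v)‖^2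
      = c^2 * ‖(-Complex.I) • mvec alpha1 u - mvec alpha2 v‖^2 := by
    rw [norm_smul]; simp [mul_pow, Complex.sq_norm]
  have h2 : ‖(-Complex.I) • mvec alpha1 u - mvec alpha2 v‖^2
      = ‖u‖^2 + ‖v‖^2 + 2*(⟪u, mvec Sigma3 v⟫_ℂ).re := by
    rw [norm_sub_sq (𝕜 := ℂ)]
    rw [norm_smul]
    simp only [norm_neg, Complex.norm_I, one_mul, norm_sq_mvec_a1, norm_sq_mvec_a2]
    have : ⟪(-Complex.I) • mvec alpha1 u, mvec alpha2 v⟫_ℂ = - ⟪u, mvec Sigma3 v⟫_ℂ := by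
      rw [inner_smul_left, inner_a1_a2]
      simp only [map_neg, Complex.conj_I, neg_neg]; ring_nf; rw [Complex.I_sq]; ring
    rw [this]
    simp only [RCLike.re_to_complex, Complex.neg_re]
    ring
  have h3 : ‖(Complex.I*(k:ℂ)) • p‖^2 = k^2 * ‖p‖^2 := by
    rw [norm_smul]; simp [mul_pow, Complex.sq_norm]
  have h4 : RCLike.re ⟪(c:ℂ) • ((-Complex.I) • mvec alpha1 u - mvec alpha2 v),
      (Complex.I*(k:ℂ)) • p⟫_ℂ
      = -(c*k)*(⟪mvec alpha1 u, p⟫_ℂ).re + (c*k)*(⟪mvec alpha2 v, p⟫_ℂ).im := by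
    rw [inner_smul_left, inner_smul_right, inner_sub_left, inner_smul_left]
    simp only [Complex.conj_I, Complex.conj_ofReal, map_neg, neg_neg, RCLike.re_to_complex]
    set z1 := ⟪mvec alpha1 u, p⟫_ℂ
    set z2 := ⟪mvec alpha2 v, p⟫_ℂ
    simp only [Complex.mul_re, Complex.mul_im, Complex.sub_re, Complex.sub_im, Complex.I_re,
      Complex.I_im, Complex.ofReal_re, Complex.ofReal_im, Complex.neg_re, Complex.neg_im,
      Complex.add_re, Complex.add_im]
    ring
  rw [h1, h2, h3, h4]
  ring

lemma ptB' (s : ℝ) (u v : E4) :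
    ‖(s:ℂ) • (-(mvec alpha1 u) - Complex.I • mvec alpha2 v)‖^2
    = s^2*‖u‖^2 + s^2*‖v‖^2 - s^2*(2*(⟪u, mvec Sigma3 v⟫_ℂ).re) := by
  have h1 : ‖(s:ℂ) • (-(mvec alpha1 u) - Complex.I • mvec alpha2 v)‖^2
      = s^2 * ‖-(mvec alpha1 u) - Complex.I • mvec alpha2 v‖^2 := by
    rw [norm_smul]; simp [mul_pow, Complex.sq_norm]
  have h0 : -(mvec alpha1 u) - Complex.I • mvec alpha2 v
      = -((mvec alpha1 u) + Complex.I • mvec alpha2 v) := by abel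
  rw [h1, h0, norm_neg, norm_add_sq (𝕜 := ℂ)]
  have h2 : ⟪mvec alpha1 u, Complex.I • mvec alpha2 v⟫_ℂ = - ⟪u, mvec Sigma3 v⟫_ℂ := by
    rw [inner_smul_right, inner_a1_a2]
    ring_nf; rw [Complex.I_sq]; ring
  rw [h2]
  have h3 : ‖Complex.I • mvec alpha2 v‖^2 = ‖v‖^2 := by
    rw [norm_smul]; simp [Complex.norm_I, norm_sq_mvec_a2]
  rw [h3, norm_sq_mvec_a1]
  simp only [RCLike.re_to_complex, Complex.neg_re]
  ring

lemma integral_deriv_cs {F : ℝ → ℝ} (h1 : ContDiff ℝ 1 F) (h2 : HasCompactSupport F) :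
    ∫ x : ℝ, deriv F x = 0 := by
  have hint : Integrable (deriv F) volume :=
    ((h1.continuous_deriv le_rfl).integrable_of_hasCompactSupport h2.deriv)
  rw [← intervalIntegral.integral_Iic_add_Ioi (b := 0) hint.integrableOn hint.integrableOn,
    HasCompactSupport.integral_Iic_deriv_eq h1 h2 0,
    HasCompactSupport.integral_Ioi_deriv_eq h1 h2 0]
  ring

lemma integral_mul_deriv_cs {F : ℝ → ℝ} (h1 : ContDiff ℝ 1 F) (h2 : HasCompactSupport F) :
    ∫ x : ℝ, x * deriv F x = - ∫ x : ℝ, F x := by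
  have hH1 : ContDiff ℝ 1 (fun x : ℝ => x * F x) := contDiff_id.mul h1
  have hH2 : HasCompactSupport (fun x : ℝ => x * F x) := h2.mul_left
  have hd : ∀ x : ℝ, deriv (fun x : ℝ => x * F x) x = F x + x * deriv F x := by
    intro x
    have hF : HasDerivAt F (deriv F x) x :=
      (h1.differentiable one_ne_zero).differentiableAt.hasDerivAt
    have : HasDerivAt (fun x : ℝ => x * F x) (1 * F x + x * deriv F x) x :=
      (hasDerivAt_id x).mul hF
    rw [this.deriv]; ring
  have h0 := integral_deriv_cs hH1 hH2
  rw [MeasureTheory.integral_congr_ae (Filter.Eventually.of_forall hd)] at h0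
  have hiF : Integrable F volume := (h1.continuous).integrable_of_hasCompactSupport h2
  have hixF : Integrable (fun x : ℝ => x * deriv F x) volume := by
    apply Continuous.integrable_of_hasCompactSupport
    · exact continuous_id.mul (h1.continuous_deriv le_rfl)
    · exact (h2.deriv).mul_left
  rw [MeasureTheory.integral_add hiF hixF] at h0
  linarith

lemma hcs_aux {G : ℝ → ℝ} {ψ : ℝ → E4} (hψ : HasCompactSupport ψ)
    (h : ∀ x, ψ x = 0 → G x = 0) : HasCompactSupport G := by
  apply HasCompactSupport.intro hψ
  intro x hx
  exact h x (image_eq_zero_of_notMem_tsupport hx)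

lemma L2sq_nonneg (f : ℝ → E4) : 0 ≤ L2sq f :=
  MeasureTheory.integral_nonneg fun x => sq_nonneg _

lemma master (θ : ℝ) (ψ : ℝ → E4) (hψ : ContDiff ℝ (⊤ : ℕ∞) ψ) (hs : HasCompactSupport ψ) :
    ∃ IF : ℝ, |IF| ≤ L2sq ψ ∧
      (∀ k : ℝ, L2sq (fun x : ℝ => Apt θ ψ x + (Complex.I * (k : ℂ)) • ψ x)
        = Real.cos (θ/2)^2 * (L2sq (deriv ψ) + L2sq (fun x : ℝ => (x:ℂ) • ψ x))
          + k^2 * L2sq ψ - Real.cos (θ/2)^2 * IF) ∧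
      L2sq (Bpt θ ψ) = Real.sin (θ/2)^2 * (L2sq (deriv ψ) + L2sq (fun x : ℝ => (x:ℂ) • ψ x))
          + Real.sin (θ/2)^2 * IF := by
  have h1top : (1 : ℕ∞) ≤ (⊤ : ℕ∞) := le_top
  have hψ1 : ContDiff ℝ 1 ψ := hψ.of_le (by exact_mod_cast h1top)
  have hψc : Continuous ψ := hψ.continuous
  have huc : Continuous (deriv ψ) := hψ.continuous_deriv (by exact_mod_cast h1top)
  have hud : HasCompactSupport (deriv ψ) := hs.deriv
  have hψd : ∀ x : ℝ, HasDerivAt ψ (deriv ψ x) x :=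
    fun x => (hψ.differentiable (by simp) x).hasDerivAt
  -- the function F and its properties
  set F : ℝ → ℝ := fun x => (⟪ψ x, mvec Sigma3 (ψ x)⟫_ℂ).re with hFdef
  have hFd : ∀ x : ℝ, HasDerivAt F (2*(⟪deriv ψ x, mvec Sigma3 (ψ x)⟫_ℂ).re) x := by
    intro x
    have h1 : HasDerivAt (fun t => mvec Sigma3 (ψ t)) (mvec Sigma3 (deriv ψ x)) x :=
      (((mvecCLM Sigma3).restrictScalars ℝ).hasFDerivAt).comp_hasDerivAt x (hψd x)
    have h2 := (hψd x).inner ℂ h1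
    have h3 : HasDerivAt F
        ((⟪ψ x, mvec Sigma3 (deriv ψ x)⟫_ℂ + ⟪deriv ψ x, mvec Sigma3 (ψ x)⟫_ℂ).re) x :=
      Complex.reCLM.hasFDerivAt.comp_hasDerivAt x h2
    have h4 : (⟪ψ x, mvec Sigma3 (deriv ψ x)⟫_ℂ + ⟪deriv ψ x, mvec Sigma3 (ψ x)⟫_ℂ).re
        = 2*(⟪deriv ψ x, mvec Sigma3 (ψ x)⟫_ℂ).re := by
      rw [Complex.add_re, re_s3_symm (ψ x) (deriv ψ x)]; ring
    rw [h4] at h3; exact h3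
  have hF1 : ContDiff ℝ 1 F :=
    Complex.reCLM.contDiff.comp (hψ1.inner ℂ (((mvecCLM Sigma3).restrictScalars ℝ).contDiff.comp hψ1))
  have hF2 : HasCompactSupport F := by
    apply hcs_aux hs
    intro x hx
    simp only [hFdef, hx, mvec_zero, inner_zero_left, Complex.zero_re]
  have hFderiv : deriv F = fun x => 2*(⟪deriv ψ x, mvec Sigma3 (ψ x)⟫_ℂ).re :=
    funext fun x => (hFd x).deriv
  -- the function G and its properties
  set G : ℝ → ℝ := fun x => (⟪mvec alpha1 (ψ x), ψ x⟫_ℂ).re with hGdef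
  have hGd : ∀ x : ℝ, HasDerivAt G (2*(⟪mvec alpha1 (deriv ψ x), ψ x⟫_ℂ).re) x := by
    intro x
    have h1 : HasDerivAt (fun t => mvec alpha1 (ψ t)) (mvec alpha1 (deriv ψ x)) x :=
      (((mvecCLM alpha1).restrictScalars ℝ).hasFDerivAt).comp_hasDerivAt x (hψd x)
    have h2 := h1.inner ℂ (hψd x)
    have h3 : HasDerivAt G
        ((⟪mvec alpha1 (ψ x), deriv ψ x⟫_ℂ + ⟪mvec alpha1 (deriv ψ x), ψ x⟫_ℂ).re) x :=
      Complex.reCLM.hasFDerivAt.comp_hasDerivAt x h2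
    have h4 : (⟪mvec alpha1 (ψ x), deriv ψ x⟫_ℂ + ⟪mvec alpha1 (deriv ψ x), ψ x⟫_ℂ).re
        = 2*(⟪mvec alpha1 (deriv ψ x), ψ x⟫_ℂ).re := by
      rw [Complex.add_re, re_a1_symm (ψ x) (deriv ψ x)]; ring
    rw [h4] at h3; exact h3
  have hG1 : ContDiff ℝ 1 G :=
    Complex.reCLM.contDiff.comp ((((mvecCLM alpha1).restrictScalars ℝ).contDiff.comp hψ1).inner ℂ hψ1)
  have hG2 : HasCompactSupport G := by
    apply hcs_aux hs
    intro x hx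
    simp only [hGdef, hx, mvec_zero, inner_zero_right, Complex.zero_re]
  have hGderiv : deriv G = fun x => 2*(⟪mvec alpha1 (deriv ψ x), ψ x⟫_ℂ).re :=
    funext fun x => (hGd x).deriv
  -- key integral identities
  have hIG : ∫ x : ℝ, 2*(⟪mvec alpha1 (deriv ψ x), ψ x⟫_ℂ).re = 0 := by
    rw [← hGderiv]; exact integral_deriv_cs hG1 hG2
  have hIxF : ∫ x : ℝ, x * (2*(⟪deriv ψ x, mvec Sigma3 (ψ x)⟫_ℂ).re) = - ∫ x : ℝ, F x := by
    rw [show (fun x : ℝ => x * (2*(⟪deriv ψ x, mvec Sigma3 (ψ x)⟫_ℂ).re))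
        = fun x : ℝ => x * deriv F x by rw [hFderiv]]
    exact integral_mul_deriv_cs hF1 hF2
  -- integrability
  have hi1 : Integrable (fun x : ℝ => ‖deriv ψ x‖^2) volume := by
    apply Continuous.integrable_of_hasCompactSupport (huc.norm.pow 2)
    exact hcs_aux hud fun x hx => by simp [hx]
  have hi2 : Integrable (fun x : ℝ => ‖(x:ℂ) • ψ x‖^2) volume := by
    apply Continuous.integrable_of_hasCompactSupport
      (((Complex.continuous_ofReal.comp continuous_id).smul hψc).norm.pow 2)
    exact hcs_aux hs fun x hx => by simp [hx]
  have hi3 : Integrable (fun x : ℝ => ‖ψ x‖^2) volume := by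
    apply Continuous.integrable_of_hasCompactSupport (hψc.norm.pow 2)
    exact hcs_aux hs fun x hx => by simp [hx]
  have hcdF : Continuous (fun x : ℝ => 2*(⟪deriv ψ x, mvec Sigma3 (ψ x)⟫_ℂ).re) :=
    continuous_const.mul (Complex.continuous_re.comp
      (huc.inner ((mvecCLM Sigma3).continuous.comp hψc)))
  have hi4 : Integrable (fun x : ℝ => x * (2*(⟪deriv ψ x, mvec Sigma3 (ψ x)⟫_ℂ).re)) volume := by
    apply Continuous.integrable_of_hasCompactSupport (continuous_id.mul hcdF)
    exact hcs_aux hs fun x hx => by simp [hx, mvec_zero]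
  have hi5 : Integrable (fun x : ℝ => 2*(⟪mvec alpha1 (deriv ψ x), ψ x⟫_ℂ).re) volume := by
    apply Continuous.integrable_of_hasCompactSupport
      (continuous_const.mul (Complex.continuous_re.comp
        (((mvecCLM alpha1).continuous.comp huc).inner hψc)))
    exact hcs_aux hs fun x hx => by simp [hx]
  have hiF : Integrable F volume := by
    apply Continuous.integrable_of_hasCompactSupport (hF1.continuous)
    exact hF2
  refine ⟨∫ x : ℝ, F x, ?_, ?_, ?_⟩
  · -- |IF| ≤ L2sq ψ
    have habs : |∫ x : ℝ, F x| ≤ ∫ x : ℝ, |F x| := by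
      simpa [Real.norm_eq_abs] using
        MeasureTheory.norm_integral_le_integral_norm (μ := volume) F
    calc |∫ x : ℝ, F x| ≤ ∫ x : ℝ, |F x| := habs
      _ ≤ ∫ x : ℝ, ‖ψ x‖^2 :=
        MeasureTheory.integral_mono hiF.abs hi3 fun x => abs_re_s3_le (ψ x)
      _ = L2sq ψ := rfl
  · -- the A-identity
    intro k
    have hpt : ∀ x : ℝ, ‖Apt θ ψ x + (Complex.I * (k:ℂ)) • ψ x‖^2
        = Real.cos (θ/2)^2 * ‖deriv ψ x‖^2 + Real.cos (θ/2)^2 * ‖(x:ℂ) • ψ x‖^2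
          + k^2 * ‖ψ x‖^2
          + Real.cos (θ/2)^2 * (x * (2*(⟪deriv ψ x, mvec Sigma3 (ψ x)⟫_ℂ).re))
          - (Real.cos (θ/2) * k) * (2*(⟪mvec alpha1 (deriv ψ x), ψ x⟫_ℂ).re) := by
      intro x
      have hApt : Apt θ ψ x = ((Real.cos (θ/2) : ℝ) : ℂ) •
          ((-Complex.I) • mvec alpha1 (deriv ψ x) - mvec alpha2 ((x:ℂ) • ψ x)) := rfl
      rw [hApt, ptA']
      rw [mvec_smulc Sigma3, inner_smul_right, mvec_smulc alpha2, inner_smul_left,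
        Complex.conj_ofReal]
      simp only [Complex.re_ofReal_mul, Complex.im_ofReal_mul, im_a2_self, mul_zero]
      ring
    have h0 : L2sq (fun x : ℝ => Apt θ ψ x + (Complex.I * (k:ℂ)) • ψ x)
        = ∫ x : ℝ, (Real.cos (θ/2)^2 * ‖deriv ψ x‖^2 + Real.cos (θ/2)^2 * ‖(x:ℂ) • ψ x‖^2
          + k^2 * ‖ψ x‖^2
          + Real.cos (θ/2)^2 * (x * (2*(⟪deriv ψ x, mvec Sigma3 (ψ x)⟫_ℂ).re))
          - (Real.cos (θ/2) * k) * (2*(⟪mvec alpha1 (deriv ψ x), ψ x⟫_ℂ).re)) :=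
      MeasureTheory.integral_congr_ae (Filter.Eventually.of_forall hpt)
    rw [h0]
    have hI12 : Integrable (fun x : ℝ => Real.cos (θ/2)^2 * ‖deriv ψ x‖^2
        + Real.cos (θ/2)^2 * ‖(x:ℂ) • ψ x‖^2) volume :=
      (hi1.const_mul (Real.cos (θ/2)^2)).add (hi2.const_mul (Real.cos (θ/2)^2))
    have hI123 : Integrable (fun x : ℝ => Real.cos (θ/2)^2 * ‖deriv ψ x‖^2
        + Real.cos (θ/2)^2 * ‖(x:ℂ) • ψ x‖^2 + k^2 * ‖ψ x‖^2) volume :=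
      hI12.add (hi3.const_mul (k^2))
    have hI1234 : Integrable (fun x : ℝ => Real.cos (θ/2)^2 * ‖deriv ψ x‖^2
        + Real.cos (θ/2)^2 * ‖(x:ℂ) • ψ x‖^2 + k^2 * ‖ψ x‖^2
        + Real.cos (θ/2)^2 * (x * (2*(⟪deriv ψ x, mvec Sigma3 (ψ x)⟫_ℂ).re))) volume :=
      hI123.add (hi4.const_mul (Real.cos (θ/2)^2))
    rw [MeasureTheory.integral_sub hI1234 (hi5.const_mul (Real.cos (θ/2) * k)),
      MeasureTheory.integral_add hI123 (hi4.const_mul _),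
      MeasureTheory.integral_add hI12 (hi3.const_mul _),
      MeasureTheory.integral_add (hi1.const_mul _) (hi2.const_mul _),
      MeasureTheory.integral_const_mul, MeasureTheory.integral_const_mul,
      MeasureTheory.integral_const_mul, MeasureTheory.integral_const_mul,
      MeasureTheory.integral_const_mul, hIxF, hIG]
    show _ = Real.cos (θ/2)^2 * ((∫ x : ℝ, ‖deriv ψ x‖^2) + ∫ x : ℝ, ‖(x:ℂ) • ψ x‖^2)
      + k^2 * (∫ x : ℝ, ‖ψ x‖^2) - Real.cos (θ/2)^2 * (∫ x : ℝ, F x)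
    ring
  · -- the B-identity
    have hpt : ∀ x : ℝ, ‖Bpt θ ψ x‖^2
        = Real.sin (θ/2)^2 * ‖deriv ψ x‖^2 + Real.sin (θ/2)^2 * ‖(x:ℂ) • ψ x‖^2
          - Real.sin (θ/2)^2 * (x * (2*(⟪deriv ψ x, mvec Sigma3 (ψ x)⟫_ℂ).re)) := by
      intro x
      have hBpt : Bpt θ ψ x = ((Real.sin (θ/2) : ℝ) : ℂ) •
          (-(mvec alpha1 (deriv ψ x)) - Complex.I • mvec alpha2 ((x:ℂ) • ψ x)) := rfl
      rw [hBpt, ptB']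
      rw [mvec_smulc Sigma3, inner_smul_right]
      simp only [Complex.re_ofReal_mul]
      ring
    have h0 : L2sq (Bpt θ ψ)
        = ∫ x : ℝ, (Real.sin (θ/2)^2 * ‖deriv ψ x‖^2 + Real.sin (θ/2)^2 * ‖(x:ℂ) • ψ x‖^2
          - Real.sin (θ/2)^2 * (x * (2*(⟪deriv ψ x, mvec Sigma3 (ψ x)⟫_ℂ).re))) :=
      MeasureTheory.integral_congr_ae (Filter.Eventually.of_forall hpt)
    rw [h0]
    have hI12 : Integrable (fun x : ℝ => Real.sin (θ/2)^2 * ‖deriv ψ x‖^2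
        + Real.sin (θ/2)^2 * ‖(x:ℂ) • ψ x‖^2) volume :=
      (hi1.const_mul (Real.sin (θ/2)^2)).add (hi2.const_mul (Real.sin (θ/2)^2))
    rw [MeasureTheory.integral_sub hI12 (hi4.const_mul (Real.sin (θ/2)^2)),
      MeasureTheory.integral_add (hi1.const_mul _) (hi2.const_mul _),
      MeasureTheory.integral_const_mul, MeasureTheory.integral_const_mul,
      MeasureTheory.integral_const_mul, hIxF]
    show _ = Real.sin (θ/2)^2 * ((∫ x : ℝ, ‖deriv ψ x‖^2) + ∫ x : ℝ, ‖(x:ℂ) • ψ x‖^2)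
      + Real.sin (θ/2)^2 * (∫ x : ℝ, F x)
    ring

/-- for every `ψ ∈ C_c^∞(ℝ)⁴` and `k ∈ ℝ`:
(i) `‖(A+ik)ψ‖² = ‖Aψ‖² + k²‖ψ‖² ≥ cos²(θ/2)(‖ψ'‖² + ‖xψ‖²) + (k² - cos²(θ/2))‖ψ‖²`;
(ii) `‖Bψ‖² ≤ sin²(θ/2)(‖ψ'‖² + ‖xψ‖² + ‖ψ‖²)`;
and consequently, if `k² > 1`, there is `b < 1` with `‖Bψ‖ ≤ b‖(A+ik)ψ‖` for all such `ψ`. -/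
theorem AB_estimates (θ : ℝ) (hθ : θ ∈ Set.Ioo (-(Real.pi / 2)) (Real.pi / 2)) (k : ℝ) :
    (∀ ψ : ℝ → E4, ContDiff ℝ (⊤ : ℕ∞) ψ → HasCompactSupport ψ →
      (L2sq (fun x : ℝ => Apt θ ψ x + (Complex.I * (k : ℂ)) • ψ x)
          = L2sq (Apt θ ψ) + k ^ 2 * L2sq ψ) ∧
      (L2sq (fun x : ℝ => Apt θ ψ x + (Complex.I * (k : ℂ)) • ψ x)
          ≥ Real.cos (θ / 2) ^ 2 * (L2sq (deriv ψ) + L2sq (fun x : ℝ => (x : ℂ) • ψ x))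
            + (k ^ 2 - Real.cos (θ / 2) ^ 2) * L2sq ψ) ∧
      (L2sq (Bpt θ ψ)
          ≤ Real.sin (θ / 2) ^ 2 *
            (L2sq (deriv ψ) + L2sq (fun x : ℝ => (x : ℂ) • ψ x) + L2sq ψ))) ∧
    (k ^ 2 > 1 → ∃ b : ℝ, b < 1 ∧
      ∀ ψ : ℝ → E4, ContDiff ℝ (⊤ : ℕ∞) ψ → HasCompactSupport ψ →
        Real.sqrt (L2sq (Bpt θ ψ))
          ≤ b * Real.sqrt (L2sq (fun x : ℝ => Apt θ ψ x + (Complex.I * (k : ℂ)) • ψ x))) := by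
  have hcosθ : 0 < Real.cos θ := Real.cos_pos_of_mem_Ioo hθ
  have h2 : 2 * (θ / 2) = θ := by ring
  have hc2eq : Real.cos (θ / 2) ^ 2 = 1 / 2 + Real.cos θ / 2 := by
    rw [Real.cos_sq, h2]
  have hs2eq : Real.sin (θ / 2) ^ 2 = 1 - Real.cos (θ / 2) ^ 2 := by
    have := Real.sin_sq_add_cos_sq (θ / 2); linarith
  have hc2pos : 0 < Real.cos (θ / 2) ^ 2 := by linarith
  have hs2nn : 0 ≤ Real.sin (θ / 2) ^ 2 := sq_nonneg _
  have hc2le1 : Real.cos (θ / 2) ^ 2 ≤ 1 := by linarith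
  have hs2lt : Real.sin (θ / 2) ^ 2 < Real.cos (θ / 2) ^ 2 := by linarith
  constructor
  · intro ψ hψ hsupp
    obtain ⟨IF, hIF, hA, hB⟩ := master θ ψ hψ hsupp
    have hIFle : IF ≤ L2sq ψ := le_trans (le_abs_self IF) hIF
    have hA0 : L2sq (Apt θ ψ)
        = Real.cos (θ / 2) ^ 2 * (L2sq (deriv ψ) + L2sq (fun x : ℝ => (x : ℂ) • ψ x))
          - Real.cos (θ / 2) ^ 2 * IF := by
      have h := hA 0
      have hfun : (fun x : ℝ => Apt θ ψ x + (Complex.I * ((0 : ℝ) : ℂ)) • ψ x) = Apt θ ψ := by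
        funext x; simp
      rw [hfun] at h
      rw [h]; ring
    refine ⟨?_, ?_, ?_⟩
    · rw [hA k, hA0]; ring
    · rw [hA k]
      nlinarith [mul_le_mul_of_nonneg_left hIFle hc2pos.le]
    · rw [hB]
      nlinarith [mul_le_mul_of_nonneg_left hIFle hs2nn]
  · intro hk
    set m := min (Real.cos (θ / 2) ^ 2) (k ^ 2 - Real.cos (θ / 2) ^ 2) with hmdef
    have hmpos : 0 < m := lt_min hc2pos (by linarith)
    have hs2m : Real.sin (θ / 2) ^ 2 < m := lt_min hs2lt (by linarith)
    refine ⟨Real.sqrt (Real.sin (θ / 2) ^ 2 / m), ?_, ?_⟩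
    · have hlt : Real.sin (θ / 2) ^ 2 / m < 1 := (div_lt_one hmpos).2 hs2m
      calc Real.sqrt (Real.sin (θ / 2) ^ 2 / m) < Real.sqrt 1 :=
            Real.sqrt_lt_sqrt (div_nonneg hs2nn hmpos.le) hlt
        _ = 1 := Real.sqrt_one
    · intro ψ hψ hsupp
      obtain ⟨IF, hIF, hA, hB⟩ := master θ ψ hψ hsupp
      have hIFle : IF ≤ L2sq ψ := le_trans (le_abs_self IF) hIF
      have hDd : 0 ≤ L2sq (deriv ψ) := L2sq_nonneg _
      have hDx : 0 ≤ L2sq (fun x : ℝ => (x : ℂ) • ψ x) := L2sq_nonneg _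
      have hDp : 0 ≤ L2sq ψ := L2sq_nonneg _
      have hm1 : m ≤ Real.cos (θ / 2) ^ 2 := min_le_left _ _
      have hm2 : m ≤ k ^ 2 - Real.cos (θ / 2) ^ 2 := min_le_right _ _
      have hkey : L2sq (Bpt θ ψ) ≤ (Real.sin (θ / 2) ^ 2 / m) *
          L2sq (fun x : ℝ => Apt θ ψ x + (Complex.I * (k : ℂ)) • ψ x) := by
        rw [hB, hA k]
        set Dd := L2sq (deriv ψ)
        set Dx := L2sq (fun x : ℝ => (x : ℂ) • ψ x)
        set Dp := L2sq ψ
        have e1 : m * (Dd + Dx + Dp)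
            ≤ Real.cos (θ / 2) ^ 2 * (Dd + Dx) + k ^ 2 * Dp - Real.cos (θ / 2) ^ 2 * IF := by
          nlinarith [mul_le_mul_of_nonneg_left hIFle hc2pos.le]
        have e2 : (Real.sin (θ / 2) ^ 2 / m) * (m * (Dd + Dx + Dp))
            ≤ (Real.sin (θ / 2) ^ 2 / m) *
              (Real.cos (θ / 2) ^ 2 * (Dd + Dx) + k ^ 2 * Dp - Real.cos (θ / 2) ^ 2 * IF) :=
          mul_le_mul_of_nonneg_left e1 (div_nonneg hs2nn hmpos.le)
        have e3 : (Real.sin (θ / 2) ^ 2 / m) * (m * (Dd + Dx + Dp))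
            = Real.sin (θ / 2) ^ 2 * (Dd + Dx + Dp) := by
          field_simp
        have e4 : Real.sin (θ / 2) ^ 2 * (Dd + Dx) + Real.sin (θ / 2) ^ 2 * IF
            ≤ Real.sin (θ / 2) ^ 2 * (Dd + Dx + Dp) := by
          nlinarith [mul_le_mul_of_nonneg_left hIFle hs2nn]
        linarith [e2, e3, e4]
      have hLAnn : 0 ≤ L2sq (fun x : ℝ => Apt θ ψ x + (Complex.I * (k : ℂ)) • ψ x) :=
        L2sq_nonneg _
      calc Real.sqrt (L2sq (Bpt θ ψ))
          ≤ Real.sqrt ((Real.sin (θ / 2) ^ 2 / m) *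
              L2sq (fun x : ℝ => Apt θ ψ x + (Complex.I * (k : ℂ)) • ψ x)) :=
            Real.sqrt_le_sqrt hkey
        _ = Real.sqrt (Real.sin (θ / 2) ^ 2 / m) *
              Real.sqrt (L2sq (fun x : ℝ => Apt θ ψ x + (Complex.I * (k : ℂ)) • ψ x)) :=
            Real.sqrt_mul (div_nonneg hs2nn hmpos.le) _
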